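/- For every integer m ≥ 1, the sequences b^(k) (k ≥ 1), where b^(k) is the k-th column of the inverse triangle B of H^(m) (so that H^(m)b^(k) is the k-th standard unit sequence e^(k)), form a Schauder basis of h_0(Δ^(m)) equipped with the norm ‖x‖ = sup_n |(H^(m)x)_n|: every x ∈ h_0(Δ^(m)) has a representation x = Σ_k λ_k b^(k) with the partial sums converging to x in this norm, the scalars λ_k are uniquely determined, and λ_k = (H^(m)x)_k for all k. -/
import Mathlib


open Filter Finset Topology

/- Real sequences are modelled as functions `ℕ → ℝ`, where the Lean index `n : ℕ`
corresponds to the paper's index `n + 1` (the paper indexes sequences by `k ≥ 1`).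
Thus the paper's entry `h_{nk} = ∑_{i=k}^{n} (-1)^{i-k} C(m, i-k) / (n+i-1)`
(for `1 ≤ k ≤ n`) becomes, with 0-based indices,
`hMat m n k = ∑_{i ∈ Icc k n} (-1)^{i-k} C(m, i-k) / (n+i+1)`. -/

/-- The entries of the triangle matrix `H^(m) = H Δ^(m)` (0-based indexing). -/
noncomputable def hMat (m n k : ℕ) : ℝ :=
  ∑ i ∈ Finset.Icc k n, (-1 : ℝ) ^ (i - k) * (Nat.choose m (i - k) : ℝ) / ((n + i + 1 : ℕ) : ℝ)

/-- The `H^(m)`-transform of a sequence: `(H^(m) x)_n = ∑_{k=1}^{n} h_{nk} x_k`. -/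
noncomputable def hTrans (m : ℕ) (x : ℕ → ℝ) (n : ℕ) : ℝ :=
  ∑ k ∈ Finset.range (n + 1), hMat m n k * x k

/-- `h_0(Δ^(m))`: sequences whose `H^(m)`-transform tends to `0`. -/
def hZero (m : ℕ) : Set (ℕ → ℝ) := {x | Tendsto (hTrans m x) atTop (𝓝 0)}

/-- `h_c(Δ^(m))`: sequences whose `H^(m)`-transform converges. -/
def hConv (m : ℕ) : Set (ℕ → ℝ) := {x | ∃ L : ℝ, Tendsto (hTrans m x) atTop (𝓝 L)}

/-- `h_∞(Δ^(m))`: sequences whose `H^(m)`-transform is bounded. -/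
def hBdd (m : ℕ) : Set (ℕ → ℝ) := {x | ∃ M : ℝ, ∀ n, |hTrans m x n| ≤ M}

/-- The space `c₀` of null real sequences. -/
def c0Seq : Set (ℕ → ℝ) := {y | Tendsto y atTop (𝓝 0)}

/-- The space `c` of convergent real sequences. -/
def cSeq : Set (ℕ → ℝ) := {y | ∃ L : ℝ, Tendsto y atTop (𝓝 L)}

/-- The space `ℓ∞` of bounded real sequences. -/
def linfSeq : Set (ℕ → ℝ) := {y | ∃ M : ℝ, ∀ n, |y n| ≤ M}

/-- The sup norm `‖y‖ = sup_n |y_n|` of a sequence. -/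
noncomputable def supNorm (y : ℕ → ℝ) : ℝ := ⨆ n, |y n|

/-- The norm `‖x‖ = sup_n |(H^(m) x)_n|` on the Hilbert difference sequence spaces. -/
noncomputable def hNorm (m : ℕ) (x : ℕ → ℝ) : ℝ := supNorm (hTrans m x)

/-- The columns `b^(k) = (B n k)_n` of the inverse triangle `B` of `H^(m)` form a Schauder
basis of `h_0(Δ^(m))` for the norm `‖x‖ = sup_n |(H^(m) x)_n|`, with coefficients
`λ_k = (H^(m) x)_k`. -/

private lemma colId (m : ℕ) (B : ℕ → ℕ → ℝ)
    (hBtri : ∀ n k : ℕ, n < k → B n k = 0)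
    (hBright : ∀ n k : ℕ, (∑ j ∈ Finset.Icc k n, hMat m n j * B j k) = if n = k then 1 else 0)
    (n k : ℕ) :
    ∑ j ∈ Finset.range (n + 1), hMat m n j * B j k = if n = k then 1 else 0 := by
  rcases le_or_gt k n with h | h
  · have hsub : Finset.Icc k n ⊆ Finset.range (n + 1) := by
      intro j hj; simp only [Finset.mem_Icc] at hj; simp only [Finset.mem_range]; omega
    have hz : ∀ j ∈ Finset.range (n + 1), j ∉ Finset.Icc k n → hMat m n j * B j k = 0 := by
      intro j hj hj2
      have : j < k := by
        simp only [Finset.mem_range] at hj; simp only [Finset.mem_Icc] at hj2; omega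
      rw [hBtri j k this, mul_zero]
    rw [← Finset.sum_subset hsub hz, hBright]
  · have hz : ∀ j ∈ Finset.range (n + 1), hMat m n j * B j k = 0 := by
      intro j hj
      simp only [Finset.mem_range] at hj
      rw [hBtri j k (by omega), mul_zero]
    rw [Finset.sum_eq_zero hz, if_neg (by omega)]

private lemma hTrans_partial (m : ℕ) (B : ℕ → ℕ → ℝ)
    (hBtri : ∀ n k : ℕ, n < k → B n k = 0)
    (hBright : ∀ n k : ℕ, (∑ j ∈ Finset.Icc k n, hMat m n j * B j k) = if n = k then 1 else 0)
    (lam : ℕ → ℝ) (K n : ℕ) :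
    hTrans m (fun n => ∑ k ∈ Finset.range (K + 1), lam k * B n k) n
      = if n ≤ K then lam n else 0 := by
  unfold hTrans
  have : ∀ j ∈ Finset.range (n + 1),
      hMat m n j * ∑ k ∈ Finset.range (K + 1), lam k * B j k
        = ∑ k ∈ Finset.range (K + 1), lam k * (hMat m n j * B j k) := by
    intro j _
    rw [Finset.mul_sum]
    exact Finset.sum_congr rfl (fun k _ => by ring)
  rw [Finset.sum_congr rfl this, Finset.sum_comm]
  have : ∀ k ∈ Finset.range (K + 1),
      ∑ j ∈ Finset.range (n + 1), lam k * (hMat m n j * B j k)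
        = if k = n then lam k else 0 := by
    intro k _
    rw [← Finset.mul_sum, colId m B hBtri hBright n k]
    by_cases h : n = k
    · subst h; simp
    · rw [if_neg h, if_neg (fun hh => h hh.symm), mul_zero]
  rw [Finset.sum_congr rfl this, Finset.sum_ite_eq' (Finset.range (K + 1)) n lam]
  simp [Nat.lt_succ_iff]

private lemma hTrans_sub (m : ℕ) (x y : ℕ → ℝ) (n : ℕ) :
    hTrans m (x - y) n = hTrans m x n - hTrans m y n := by
  unfold hTrans
  rw [← Finset.sum_sub_distrib]
  exact Finset.sum_congr rfl (fun k _ => by simp [Pi.sub_apply]; ring)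

theorem hilbert_diff_h0_basis (m : ℕ) (hm : 1 ≤ m)
    (B : ℕ → ℕ → ℝ)
    (hBtri : ∀ n k : ℕ, n < k → B n k = 0)
    (hBright : ∀ n k : ℕ, (∑ j ∈ Finset.Icc k n, hMat m n j * B j k) = if n = k then 1 else 0)
    (hBleft : ∀ n k : ℕ, (∑ j ∈ Finset.Icc k n, B n j * hMat m j k) = if n = k then 1 else 0) :
    ∀ x ∈ hZero m,
      Tendsto (fun K => hNorm m
          (x - (fun n => ∑ k ∈ Finset.range (K + 1), hTrans m x k * B n k))) atTop (𝓝 0) ∧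
      ∀ lam : ℕ → ℝ,
        Tendsto (fun K => hNorm m
            (x - (fun n => ∑ k ∈ Finset.range (K + 1), lam k * B n k))) atTop (𝓝 0) →
        lam = fun k => hTrans m x k := by
  intro x hx
  have hx' : Tendsto (hTrans m x) atTop (𝓝 0) := hx
  -- key: H-transform of the remainder
  have key : ∀ (lam : ℕ → ℝ) (K n : ℕ),
      hTrans m (x - (fun n => ∑ k ∈ Finset.range (K + 1), lam k * B n k)) n
        = hTrans m x n - (if n ≤ K then lam n else 0) := by
    intro lam K n
    rw [hTrans_sub, hTrans_partial m B hBtri hBright]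
  constructor
  · -- convergence of partial sums with lam = hTrans m x
    rw [Metric.tendsto_atTop]
    intro ε hε
    rw [Metric.tendsto_atTop] at hx'
    obtain ⟨N, hN⟩ := hx' (ε / 2) (by linarith)
    refine ⟨N, fun K hK => ?_⟩
    have hbound : ∀ n, |hTrans m
        (x - (fun n => ∑ k ∈ Finset.range (K + 1), hTrans m x k * B n k)) n| ≤ ε / 2 := by
      intro n
      rw [key]
      by_cases h : n ≤ K
      · simp [h]; linarith
      · rw [if_neg h, sub_zero]
        have := hN n (by omega)
        rw [Real.dist_eq, sub_zero] at this
        linarith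
    have hsup : hNorm m
        (x - (fun n => ∑ k ∈ Finset.range (K + 1), hTrans m x k * B n k)) ≤ ε / 2 :=
      ciSup_le hbound
    have hnn : 0 ≤ hNorm m
        (x - (fun n => ∑ k ∈ Finset.range (K + 1), hTrans m x k * B n k)) :=
      Real.iSup_nonneg (fun n => abs_nonneg _)
    rw [Real.dist_eq, sub_zero, abs_of_nonneg hnn]
    linarith
  · -- uniqueness
    intro lam hlam
    funext k
    -- boundedness of hTrans m x
    obtain ⟨C, hC⟩ : ∃ C, ∀ n, |hTrans m x n| ≤ C := by
      have := hx'.abs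
      obtain ⟨C, hC⟩ := (this.bddAbove_range).imp (fun C h => h)
      exact ⟨C, fun n => hC ⟨n, rfl⟩⟩
    have hk : |hTrans m x k - lam k| ≤ 0 := by
      apply ge_of_tendsto hlam
      rw [eventually_atTop]
      refine ⟨k, fun K hK => ?_⟩
      set r : ℕ → ℝ := fun n =>
        hTrans m (x - (fun n => ∑ j ∈ Finset.range (K + 1), lam j * B n j)) n with hr
      have hbd : BddAbove (Set.range (fun n => |r n|)) := by
        refine ⟨C + (Finset.range (K + 1)).sup' (by simp) (fun j => |lam j|), ?_⟩
        rintro _ ⟨n, rfl⟩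
        have h1 : |r n| ≤ |hTrans m x n| + |if n ≤ K then lam n else 0| := by
          rw [hr]; simp only; rw [key]; exact abs_sub _ _
        have h2 : |if n ≤ K then lam n else 0|
            ≤ (Finset.range (K + 1)).sup' (by simp) (fun j => |lam j|) := by
          by_cases h : n ≤ K
          · rw [if_pos h]
            exact Finset.le_sup' (fun j => |lam j|) (Finset.mem_range.mpr (Nat.lt_succ_of_le h))
          · rw [if_neg h, abs_zero]
            exact le_trans (abs_nonneg (lam 0))
              (Finset.le_sup' (fun j => |lam j|) (Finset.mem_range.mpr (Nat.succ_pos K)))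
        calc |r n| ≤ |hTrans m x n| + |if n ≤ K then lam n else 0| := h1
          _ ≤ C + (Finset.range (K + 1)).sup' (by simp) (fun j => |lam j|) :=
            add_le_add (hC n) h2
      have hle : |r k| ≤ ⨆ n, |r n| := le_ciSup hbd k
      have hrk : r k = hTrans m x k - lam k := by
        rw [hr]; simp only; rw [key, if_pos hK]
      rw [hrk] at hle
      exact hle
    have := abs_nonneg (hTrans m x k - lam k)
    have : hTrans m x k - lam k = 0 := abs_eq_zero.mp (le_antisymm hk this)
    linarith [this]
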